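/- Let J₁ and J₂ be convex and connected subsets of (ℝ,≤)². If there exist a,a' ∈ J₁ and b,b' ∈ J₂ with a ≤ b and a' ≥ b', then J₁ ∩ J₂ ≠ ∅. -/

import Mathlib

/-- A zigzag path `a - x₁ - ⋯ - xₙ - b` in a preorder, where each consecutive
pair of points is comparable. -/
inductive Zigzag (P : Type) [Preorder P] : P → P → Type
  | single (a : P) : Zigzag P a a
  | consLe {a b c : P} (h : a ≤ b) (p : Zigzag P b c) : Zigzag P a c
  | consGe {a b c : P} (h : b ≤ a) (p : Zigzag P b c) : Zigzag P a c

/-- Convexity of a subset of a poset: `i ≤ j ≤ k` with `i, k ∈ J` implies `j ∈ J`. -/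
def PosetConvex {P : Type} [Preorder P] (J : Set P) : Prop :=
  ∀ i ∈ J, ∀ k ∈ J, ∀ j : P, i ≤ j → j ≤ k → j ∈ J

/-- Connectedness: any two points of `J` are joined by a finite zigzag path inside `J`. -/
def ZigzagConnected {P : Type} [Preorder P] (J : Set P) : Prop :=
  ∀ a b : J, Nonempty (Zigzag (↥J) a b)

open Set

/-- Comparable points of a poset-convex set of `ℝ × ℝ` are joined inside it. -/
lemma joinedIn_of_le {J : Set (ℝ × ℝ)} (hc : PosetConvex J) {u v : ℝ × ℝ}
    (hu : u ∈ J) (hv : v ∈ J) (huv : u ≤ v) : JoinedIn J u v := by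
  have hpc : IsPathConnected (Icc u v) :=
    (convex_Icc u v).isPathConnected ⟨u, le_refl u, huv⟩
  refine (hpc.joinedIn u ⟨le_rfl, huv⟩ v ⟨huv, le_rfl⟩).mono ?_
  intro j hj
  exact hc u hu v hv j hj.1 hj.2

/-- A zigzag inside a poset-convex set of `ℝ × ℝ` yields a topological path. -/
lemma joinedIn_of_zigzag {J : Set (ℝ × ℝ)} (hc : PosetConvex J) :
    ∀ {x y : ↥J}, Zigzag ↥J x y → JoinedIn J x.1 y.1 := by
  intro x y z
  induction z with
  | single a => exact JoinedIn.refl a.2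
  | consLe h p ih => exact (joinedIn_of_le hc (by exact Subtype.mem _) (Subtype.mem _) h).trans ih
  | consGe h p ih =>
      exact ((joinedIn_of_le hc (Subtype.mem _) (Subtype.mem _) h).symm).trans ih

lemma le_left_endpoint {f : ℝ → ℝ} (hf : Continuous f) {s₁ s₂ c : ℝ} (h : s₁ < s₂)
    (hb : ∀ s ∈ Ioo s₁ s₂, c ≤ f s) : c ≤ f s₁ := by
  have ht : Filter.Tendsto f (nhdsWithin s₁ (Ioi s₁)) (nhds (f s₁)) :=
    (hf.continuousAt).continuousWithinAt
  refine ge_of_tendsto ht ?_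
  filter_upwards [Ioo_mem_nhdsGT_of_mem ⟨le_refl s₁, h⟩] with s hs using hb s hs

lemma le_right_endpoint {f : ℝ → ℝ} (hf : Continuous f) {s₁ s₂ c : ℝ} (h : s₁ < s₂)
    (hb : ∀ s ∈ Ioo s₁ s₂, c ≤ f s) : c ≤ f s₂ := by
  have ht : Filter.Tendsto f (nhdsWithin s₂ (Iio s₂)) (nhds (f s₂)) :=
    (hf.continuousAt).continuousWithinAt
  refine ge_of_tendsto ht ?_
  filter_upwards [Ioo_mem_nhdsLT_of_mem ⟨h, le_refl s₂⟩] with s hs using hb s hs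

lemma left_endpoint_le {f : ℝ → ℝ} (hf : Continuous f) {s₁ s₂ c : ℝ} (h : s₁ < s₂)
    (hb : ∀ s ∈ Ioo s₁ s₂, f s ≤ c) : f s₁ ≤ c := by
  have := le_left_endpoint (f := fun s => -f s) (hf.neg) (c := -c) h
    (fun s hs => neg_le_neg (hb s hs))
  simpa using this

lemma right_endpoint_le {f : ℝ → ℝ} (hf : Continuous f) {s₁ s₂ c : ℝ} (h : s₁ < s₂)
    (hb : ∀ s ∈ Ioo s₁ s₂, f s ≤ c) : f s₂ ≤ c := by
  have := le_right_endpoint (f := fun s => -f s) (hf.neg) (c := -c) h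
    (fun s hs => neg_le_neg (hb s hs))
  simpa using this

/-- If `J₁, J₂ ⊆ (ℝ,≤)²` are convex and connected, `a, a' ∈ J₁`,
`b, b' ∈ J₂`, `a ≤ b` and `a' ≥ b'`, then `J₁ ∩ J₂ ≠ ∅`. -/
theorem statement4 (J₁ J₂ : Set (ℝ × ℝ))
    (hconv₁ : PosetConvex J₁) (hconn₁ : ZigzagConnected J₁)
    (hconv₂ : PosetConvex J₂) (hconn₂ : ZigzagConnected J₂)
    (a a' : ℝ × ℝ) (ha : a ∈ J₁) (ha' : a' ∈ J₁)
    (b b' : ℝ × ℝ) (hb : b ∈ J₂) (hb' : b' ∈ J₂)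
    (hab : a ≤ b) (hba' : b' ≤ a') :
    (J₁ ∩ J₂).Nonempty := by
  classical
  -- paths
  obtain ⟨γ, hγ⟩ := joinedIn_of_zigzag hconv₁
    ((hconn₁ ⟨a, ha⟩ ⟨a', ha'⟩).some)
  obtain ⟨δ, hδ⟩ := joinedIn_of_zigzag hconv₂
    ((hconn₂ ⟨b, hb⟩ ⟨b', hb'⟩).some)
  set g : ℝ → ℝ × ℝ := ⇑γ.extend with hgdef
  set d : ℝ → ℝ × ℝ := ⇑δ.extend with hddef
  have hg : ∀ s, g s ∈ J₁ := by
    intro s; rw [hgdef]; exact hγ _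
  have hd : ∀ t, d t ∈ J₂ := by
    intro t; rw [hddef]; exact hδ _
  have hgc : Continuous g := γ.continuous_extend
  have hdc : Continuous d := δ.continuous_extend
  have hg0 : g 0 = a := γ.extend_zero
  have hg1 : g 1 = a' := γ.extend_one
  have hd0 : d 0 = b := δ.extend_zero
  have hd1 : d 1 = b' := δ.extend_one
  -- the sets D and E
  set D : Set ℝ := {s | s ∈ Icc (0:ℝ) 1 ∧ ∃ t ∈ Icc (0:ℝ) 1, g s ≤ d t} with hDdef
  set E : Set ℝ := {s | s ∈ Icc (0:ℝ) 1 ∧ ∃ t ∈ Icc (0:ℝ) 1, d t ≤ g s} with hEdef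
  have h0D : (0:ℝ) ∈ D := ⟨⟨le_refl 0, zero_le_one⟩, 0, ⟨le_refl 0, zero_le_one⟩,
    by rw [hg0, hd0]; exact hab⟩
  have h1E : (1:ℝ) ∈ E := ⟨⟨zero_le_one, le_refl 1⟩, 1, ⟨zero_le_one, le_refl 1⟩,
    by rw [hg1, hd1]; exact hba'⟩
  by_cases hDE : ∃ s, s ∈ D ∧ s ∈ E
  · obtain ⟨s, ⟨_, t, _, hst⟩, ⟨_, t', _, hst'⟩⟩ := hDE
    exact ⟨g s, hg s, hconv₂ (d t') (hd t') (d t) (hd t) (g s) hst' hst⟩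
  push_neg at hDE
  -- compactness of D and E
  have hcompact : ∀ C : Set (ℝ × ℝ), IsClosed C →
      IsCompact {s | s ∈ Icc (0:ℝ) 1 ∧ ∃ t ∈ Icc (0:ℝ) 1, (s, t) ∈ C} := by
    intro C hC
    have himg : {s | s ∈ Icc (0:ℝ) 1 ∧ ∃ t ∈ Icc (0:ℝ) 1, (s, t) ∈ C} =
        Prod.fst '' ((Icc (0:ℝ) 1 ×ˢ Icc (0:ℝ) 1) ∩ C) := by
      ext s
      constructor
      · rintro ⟨hs, t, ht, hst⟩
        exact ⟨(s, t), ⟨⟨hs, ht⟩, hst⟩, rfl⟩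
      · rintro ⟨⟨s', t⟩, ⟨⟨hs, ht⟩, hst⟩, rfl⟩
        exact ⟨hs, t, ht, hst⟩
    rw [himg]
    exact (((isCompact_Icc.prod isCompact_Icc).inter_right hC).image continuous_fst)
  have hDcomp : IsCompact D := by
    have hC : IsClosed {st : ℝ × ℝ | (g st.1).1 ≤ (d st.2).1 ∧ (g st.1).2 ≤ (d st.2).2} :=
      IsClosed.inter
        (isClosed_le (continuous_fst.comp (hgc.comp continuous_fst))
          (continuous_fst.comp (hdc.comp continuous_snd)))
        (isClosed_le (continuous_snd.comp (hgc.comp continuous_fst))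
          (continuous_snd.comp (hdc.comp continuous_snd)))
    have := hcompact _ hC
    exact this
  have hEcomp : IsCompact E := by
    have hC : IsClosed {st : ℝ × ℝ | (d st.2).1 ≤ (g st.1).1 ∧ (d st.2).2 ≤ (g st.1).2} :=
      IsClosed.inter
        (isClosed_le (continuous_fst.comp (hdc.comp continuous_snd))
          (continuous_fst.comp (hgc.comp continuous_fst)))
        (isClosed_le (continuous_snd.comp (hdc.comp continuous_snd))
          (continuous_snd.comp (hgc.comp continuous_fst)))
    have := hcompact _ hC
    exact this
  -- the gap
  set s₂ : ℝ := sInf E with hs₂def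
  have hs₂E : s₂ ∈ E := hEcomp.sInf_mem ⟨1, h1E⟩
  set s₁ : ℝ := sSup (D ∩ Icc 0 s₂) with hs₁def
  have hDIcomp : IsCompact (D ∩ Icc 0 s₂) :=
    hDcomp.inter_right isClosed_Icc
  have h0DI : (0:ℝ) ∈ D ∩ Icc 0 s₂ := ⟨h0D, le_refl 0, hs₂E.1.1⟩
  have hs₁mem : s₁ ∈ D ∩ Icc 0 s₂ := hDIcomp.sSup_mem ⟨0, h0DI⟩
  have hs₁D : s₁ ∈ D := hs₁mem.1
  have hs₁lt : s₁ < s₂ := by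
    refine lt_of_le_of_ne hs₁mem.2.2 (fun h => hDE s₁ hs₁D ?_)
    rw [h]; exact hs₂E
  have hmid : ∀ s ∈ Ioo s₁ s₂, s ∉ D ∧ s ∉ E := by
    intro s hs
    constructor
    · intro hsD
      have : s ≤ s₁ := le_csSup hDIcomp.bddAbove ⟨hsD, le_trans hs₁mem.2.1 (le_of_lt hs.1),
        le_of_lt hs.2⟩
      exact absurd hs.1 (not_lt_of_ge this)
    · intro hsE
      have : s₂ ≤ s := csInf_le hEcomp.bddBelow hsE
      exact absurd hs.2 (not_lt_of_ge this)
  have hmidIcc : ∀ s ∈ Ioo s₁ s₂, s ∈ Icc (0:ℝ) 1 :=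
    fun s hs => ⟨le_trans hs₁mem.2.1 (le_of_lt hs.1), le_trans (le_of_lt hs.2) hs₂E.1.2⟩
  -- incomparability in the gap
  have hincomp : ∀ s ∈ Ioo s₁ s₂, ∀ t ∈ Icc (0:ℝ) 1,
      ((d t).1 < (g s).1 ∧ (g s).2 < (d t).2) ∨ ((g s).1 < (d t).1 ∧ (d t).2 < (g s).2) := by
    intro s hs t ht
    have hnD : ¬ (g s ≤ d t) := fun h => (hmid s hs).1 ⟨hmidIcc s hs, t, ht, h⟩
    have hnE : ¬ (d t ≤ g s) := fun h => (hmid s hs).2 ⟨hmidIcc s hs, t, ht, h⟩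
    rw [Prod.le_def, not_and_or] at hnD hnE
    push_neg at hnD hnE
    rcases hnD with h1 | h2 <;> rcases hnE with h1' | h2'
    · exact absurd h1 (not_lt_of_gt h1')
    · exact Or.inl ⟨h1, h2'⟩
    · exact Or.inr ⟨h1', h2⟩
    · exact absurd h2 (not_lt_of_gt h2')
  -- side dichotomy via connectedness
  have hW : IsPreconnected (Ioo s₁ s₂ ×ˢ Icc (0:ℝ) 1) :=
    isPreconnected_Ioo.prod isPreconnected_Icc
  have hside : (∀ s ∈ Ioo s₁ s₂, ∀ t ∈ Icc (0:ℝ) 1, (d t).1 < (g s).1) ∨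
      (∀ s ∈ Ioo s₁ s₂, ∀ t ∈ Icc (0:ℝ) 1, (g s).1 < (d t).1) := by
    by_contra hcon
    push_neg at hcon
    obtain ⟨⟨su, hsu, tu, htu, hu⟩, ⟨sv, hsv, tv, htv, hv⟩⟩ := hcon
    set U : Set (ℝ × ℝ) := {st | (d st.2).1 < (g st.1).1} with hUdef
    set V : Set (ℝ × ℝ) := {st | (g st.1).1 < (d st.2).1} with hVdef
    have hUopen : IsOpen U := isOpen_lt (continuous_fst.comp (hdc.comp continuous_snd))
      (continuous_fst.comp (hgc.comp continuous_fst))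
    have hVopen : IsOpen V := isOpen_lt (continuous_fst.comp (hgc.comp continuous_fst))
      (continuous_fst.comp (hdc.comp continuous_snd))
    have hcover : Ioo s₁ s₂ ×ˢ Icc (0:ℝ) 1 ⊆ U ∪ V := by
      rintro ⟨s, t⟩ ⟨hs, ht⟩
      rcases hincomp s hs t ht with h | h
      · exact Or.inl h.1
      · exact Or.inr h.1
    have hUne : ((Ioo s₁ s₂ ×ˢ Icc (0:ℝ) 1) ∩ U).Nonempty := by
      refine ⟨(sv, tv), ⟨hsv, htv⟩, ?_⟩
      rcases hincomp sv hsv tv htv with h | h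
      · exact h.1
      · exact absurd h.1 (by simpa using hv)
    have hVne : ((Ioo s₁ s₂ ×ˢ Icc (0:ℝ) 1) ∩ V).Nonempty := by
      refine ⟨(su, tu), ⟨hsu, htu⟩, ?_⟩
      rcases hincomp su hsu tu htu with h | h
      · exact absurd h.1 (by simpa using hu)
      · exact h.1
    obtain ⟨st, _, hstU, hstV⟩ := hW U V hUopen hVopen hcover hUne hVne
    simp only [hUdef, hVdef, Set.mem_setOf_eq] at hstU hstV
    exact absurd hstV (not_lt_of_gt hstU)
  -- witnesses at the endpoints
  obtain ⟨hs₁Icc, tu, htu, hpu⟩ := hs₁D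
  obtain ⟨hs₂Icc, tv, htv, hvp⟩ := hs₂E
  set p : ℝ × ℝ := g s₁ with hpdef
  set p' : ℝ × ℝ := g s₂ with hp'def
  set u : ℝ × ℝ := d tu with hudef
  set v : ℝ × ℝ := d tv with hvdef
  have hpJ : p ∈ J₁ := hg s₁
  have hp'J : p' ∈ J₁ := hg s₂
  have huJ : u ∈ J₂ := hd tu
  have hvJ : v ∈ J₂ := hd tv
  rcases hside with hUL | hLR
  · -- all of the J₂ path strictly upper-left: (d t).1 < (g s).1 and (g s).2 < (d t).2
    have hside2 : ∀ s ∈ Ioo s₁ s₂, ∀ t ∈ Icc (0:ℝ) 1, (g s).2 < (d t).2 := by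
      intro s hs t ht
      rcases hincomp s hs t ht with h | h
      · exact h.2
      · exact absurd (hUL s hs t ht) (not_lt_of_gt h.1)
    -- limit inequalities
    have A1 : ∀ t ∈ Icc (0:ℝ) 1, (d t).1 ≤ p.1 ∧ (d t).1 ≤ p'.1 := by
      intro t ht
      exact ⟨le_left_endpoint (continuous_fst.comp hgc) hs₁lt
          (fun s hs => le_of_lt (hUL s hs t ht)),
        le_right_endpoint (continuous_fst.comp hgc) hs₁lt
          (fun s hs => le_of_lt (hUL s hs t ht))⟩
    have A2 : ∀ t ∈ Icc (0:ℝ) 1, p.2 ≤ (d t).2 ∧ p'.2 ≤ (d t).2 := by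
      intro t ht
      exact ⟨left_endpoint_le (continuous_snd.comp hgc) hs₁lt
          (fun s hs => le_of_lt (hside2 s hs t ht)),
        right_endpoint_le (continuous_snd.comp hgc) hs₁lt
          (fun s hs => le_of_lt (hside2 s hs t ht))⟩
    set M : ℝ × ℝ := (p.1, p'.2) with hMdef
    have hvM : v ≤ M := ⟨(A1 tv htv).1, hvp.2⟩
    have hMu : M ≤ u := ⟨hpu.1, (A2 tu htu).2⟩
    have hMJ₂ : M ∈ J₂ := hconv₂ v hvJ u huJ M hvM hMu
    have hpM : p ≤ M := ⟨le_refl _, le_trans (A2 tv htv).1 hvp.2⟩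
    have hMp' : M ≤ p' := ⟨le_trans hpu.1 (A1 tu htu).2, le_refl _⟩
    have hMJ₁ : M ∈ J₁ := hconv₁ p hpJ p' hp'J M hpM hMp'
    exact ⟨M, hMJ₁, hMJ₂⟩
  · -- all of the J₂ path strictly lower-right: (g s).1 < (d t).1 and (d t).2 < (g s).2
    have hside2 : ∀ s ∈ Ioo s₁ s₂, ∀ t ∈ Icc (0:ℝ) 1, (d t).2 < (g s).2 := by
      intro s hs t ht
      rcases hincomp s hs t ht with h | h
      · exact absurd (hLR s hs t ht) (not_lt_of_gt h.1)
      · exact h.2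
    have B1 : ∀ t ∈ Icc (0:ℝ) 1, p.1 ≤ (d t).1 ∧ p'.1 ≤ (d t).1 := by
      intro t ht
      exact ⟨left_endpoint_le (continuous_fst.comp hgc) hs₁lt
          (fun s hs => le_of_lt (hLR s hs t ht)),
        right_endpoint_le (continuous_fst.comp hgc) hs₁lt
          (fun s hs => le_of_lt (hLR s hs t ht))⟩
    have B2 : ∀ t ∈ Icc (0:ℝ) 1, (d t).2 ≤ p.2 ∧ (d t).2 ≤ p'.2 := by
      intro t ht
      exact ⟨le_left_endpoint (continuous_snd.comp hgc) hs₁lt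
          (fun s hs => le_of_lt (hside2 s hs t ht)),
        le_right_endpoint (continuous_snd.comp hgc) hs₁lt
          (fun s hs => le_of_lt (hside2 s hs t ht))⟩
    set M : ℝ × ℝ := (p'.1, p.2) with hMdef
    have hvM : v ≤ M := ⟨hvp.1, (B2 tv htv).1⟩
    have hMu : M ≤ u := ⟨(B1 tu htu).2, hpu.2⟩
    have hMJ₂ : M ∈ J₂ := hconv₂ v hvJ u huJ M hvM hMu
    have hpM : p ≤ M := ⟨le_trans (B1 tv htv).1 hvp.1, le_refl _⟩
    have hMp' : M ≤ p' := ⟨le_refl _, le_trans hpu.2 (B2 tu htu).2⟩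
    have hMJ₁ : M ∈ J₁ := hconv₁ p hpJ p' hp'J M hpM hMp'
    exact ⟨M, hMJ₁, hMJ₂⟩
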